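/- If a k-germ ω is alternating then so is δω: if for every permutation σ of {0,…,k} and every k-simplex S one has ⟨σS, ω⟩ = sign(σ)·⟨S, ω⟩, then for every permutation σ of {0,…,k+1} and every (k+1)-simplex T one has ⟨σT, δω⟩ = sign(σ)·⟨T, δω⟩. -/

import Mathlib

/-- The euclidean space `ℝ^d` in which simplices live. -/
abbrev Pt (d : ℕ) := EuclideanSpace ℝ (Fin d)

/-- The coboundary of a germ, dual to the alternating-sum boundary operator. -/
noncomputable def cobdry {d n : ℕ} (ω : (Fin n → Pt d) → ℝ) :
    (Fin (n + 1) → Pt d) → ℝ :=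
  fun T => ∑ i : Fin (n + 1), (-1 : ℝ) ^ (i : ℕ) * ω (T ∘ i.succAbove)

/-- Composing the adjacent swap with `succAbove` of the lower index gives
`succAbove` of the upper index. -/
lemma swap_comp_succAbove_castSucc {n : ℕ} (i : Fin (n + 1)) (x : Fin (n + 1)) :
    Equiv.swap i.castSucc i.succ (i.castSucc.succAbove x) = i.succ.succAbove x := by
  rcases lt_trichotomy x i with h | rfl | h
  · have h1 : x.castSucc < i.castSucc := Fin.castSucc_lt_castSucc_iff.2 h
    have h2 : x.castSucc < i.succ := h1.trans (Fin.castSucc_lt_succ : Fin.castSucc i < Fin.succ i)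
    rw [Fin.succAbove_of_castSucc_lt _ _ h1, Fin.succAbove_of_castSucc_lt _ _ h2,
      Equiv.swap_apply_of_ne_of_ne h1.ne h2.ne]
  · simp [Fin.succAbove_castSucc_self, Fin.succAbove_succ_self]
  · have h1 : i.castSucc ≤ x.castSucc := (Fin.castSucc_lt_castSucc_iff.2 h).le
    have h2 : i.succ ≤ x.castSucc := Fin.castSucc_lt_iff_succ_le.1 (Fin.castSucc_lt_castSucc_iff.2 h)
    have h3 : i.castSucc < x.succ := ((Fin.castSucc_lt_succ : Fin.castSucc i < Fin.succ i).trans_le h2).trans (Fin.castSucc_lt_succ : Fin.castSucc x < Fin.succ x)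
    have h4 : i.succ < x.succ := h2.trans_lt (Fin.castSucc_lt_succ : Fin.castSucc x < Fin.succ x)
    rw [Fin.succAbove_of_le_castSucc _ _ h1, Fin.succAbove_of_le_castSucc _ _ h2,
      Equiv.swap_apply_of_ne_of_ne h3.ne' h4.ne']

lemma swap_comp_succAbove_succ {n : ℕ} (i : Fin (n + 1)) (x : Fin (n + 1)) :
    Equiv.swap i.castSucc i.succ (i.succ.succAbove x) = i.castSucc.succAbove x := by
  have := swap_comp_succAbove_castSucc i x
  calc Equiv.swap i.castSucc i.succ (i.succ.succAbove x)
      = Equiv.swap i.castSucc i.succ (Equiv.swap i.castSucc i.succ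
          (i.castSucc.succAbove x)) := by rw [this]
    _ = i.castSucc.succAbove x := Equiv.swap_apply_self _ _ _

/-- If `u, v` avoid `l`, the swap of `u` and `v` pulls back along `l.succAbove`
to a swap. -/
lemma swap_comp_succAbove_of_ne {n : ℕ} (l u v : Fin (n + 1)) (hu : u ≠ l) (hv : v ≠ l)
    (huv : u ≠ v) :
    ∃ a b : Fin n, a ≠ b ∧ ∀ x, Equiv.swap u v (l.succAbove x) =
      l.succAbove (Equiv.swap a b x) := by
  obtain ⟨a, ha⟩ := Fin.exists_succAbove_eq hu
  obtain ⟨b, hb⟩ := Fin.exists_succAbove_eq hv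
  refine ⟨a, b, fun h => huv (by rw [← ha, ← hb, h]), fun x => ?_⟩
  rcases eq_or_ne x a with rfl | hxa
  · rw [ha, Equiv.swap_apply_left, Equiv.swap_apply_left, hb]
  rcases eq_or_ne x b with rfl | hxb
  · rw [hb, Equiv.swap_apply_right, Equiv.swap_apply_right, ha]
  · rw [Equiv.swap_apply_of_ne_of_ne
      (fun h => hxa (Fin.succAbove_right_injective (h.trans ha.symm)))
      (fun h => hxb (Fin.succAbove_right_injective (h.trans hb.symm))),
      Equiv.swap_apply_of_ne_of_ne hxa hxb]

/-- The key case: the coboundary changes sign under an adjacent transposition. -/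
lemma cobdry_swap {d k : ℕ} (ω : (Fin (k + 1) → Pt d) → ℝ)
    (halt : ∀ σ : Equiv.Perm (Fin (k + 1)), ∀ S : Fin (k + 1) → Pt d,
      ω (S ∘ ⇑σ⁻¹) = ((Equiv.Perm.sign σ : ℤ) : ℝ) * ω S)
    (i : Fin (k + 1)) (T : Fin (k + 2) → Pt d) :
    cobdry ω (T ∘ Equiv.swap i.castSucc i.succ) = - cobdry ω T := by
  have hne : (i.castSucc : Fin (k + 2)) ≠ i.succ := (Fin.castSucc_lt_succ : Fin.castSucc i < Fin.succ i).ne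
  have hωswap : ∀ (a b : Fin (k + 1)), a ≠ b → ∀ S : Fin (k + 1) → Pt d,
      ω (S ∘ Equiv.swap a b) = - ω S := by
    intro a b hab S
    have h := halt (Equiv.swap a b) S
    rw [Equiv.swap_inv, Equiv.Perm.sign_swap hab] at h
    simpa using h
  unfold cobdry
  rw [← Finset.sum_neg_distrib]
  rw [← Equiv.sum_comp (Equiv.swap i.castSucc i.succ)
    (fun l : Fin (k + 2) => (-1 : ℝ) ^ (l : ℕ) * ω ((T ∘ Equiv.swap i.castSucc i.succ) ∘ l.succAbove))]
  apply Finset.sum_congr rfl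
  intro l _
  rcases eq_or_ne l i.castSucc with rfl | hl1
  · rw [Equiv.swap_apply_left]
    have hcomp : (T ∘ ⇑(Equiv.swap i.castSucc i.succ)) ∘ i.succ.succAbove
        = T ∘ i.castSucc.succAbove := by
      funext x
      simp only [Function.comp_apply, swap_comp_succAbove_succ]
    rw [hcomp]
    simp only [Fin.val_succ, Fin.coe_castSucc]
    ring
  rcases eq_or_ne l i.succ with rfl | hl2
  · rw [Equiv.swap_apply_right]
    have hcomp : (T ∘ ⇑(Equiv.swap i.castSucc i.succ)) ∘ i.castSucc.succAbove
        = T ∘ i.succ.succAbove := by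
      funext x
      simp only [Function.comp_apply, swap_comp_succAbove_castSucc]
    rw [hcomp]
    simp only [Fin.val_succ, Fin.coe_castSucc]
    ring
  · rw [Equiv.swap_apply_of_ne_of_ne hl1 hl2]
    obtain ⟨a, b, hab, hsw⟩ := swap_comp_succAbove_of_ne l i.castSucc i.succ
      (Ne.symm hl1) (Ne.symm hl2) hne
    have hcomp : (T ∘ ⇑(Equiv.swap i.castSucc i.succ)) ∘ l.succAbove
        = (T ∘ l.succAbove) ∘ Equiv.swap a b := by
      funext x
      simp only [Function.comp_apply, hsw]
    rw [hcomp, hωswap a b hab]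
    ring

/-- If a `k`-germ `ω` is alternating, i.e. `⟨σS, ω⟩ = sign(σ)·⟨S, ω⟩` for every
permutation `σ` of `{0,…,k}` (acting by `σ[p₀…p_k] = [p_{σ⁻¹(0)}…p_{σ⁻¹(k)}]`),
then so is `δω`. -/
theorem cobdry_alternating {d k : ℕ} (ω : (Fin (k + 1) → Pt d) → ℝ)
    (halt : ∀ σ : Equiv.Perm (Fin (k + 1)), ∀ S : Fin (k + 1) → Pt d,
      ω (S ∘ ⇑σ⁻¹) = ((Equiv.Perm.sign σ : ℤ) : ℝ) * ω S) :
    ∀ σ : Equiv.Perm (Fin (k + 2)), ∀ T : Fin (k + 2) → Pt d,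
      cobdry ω (T ∘ ⇑σ⁻¹) = ((Equiv.Perm.sign σ : ℤ) : ℝ) * cobdry ω T := by
  intro σ T
  have hgen := Equiv.Perm.mclosure_swap_castSucc_succ (k + 1)
  have hmem : σ ∈ Submonoid.closure
      (Set.range fun i : Fin (k + 1) => Equiv.swap i.castSucc i.succ) := by
    rw [hgen]; trivial
  induction hmem using Submonoid.closure_induction generalizing T with
  | mem x hx =>
    obtain ⟨i, rfl⟩ := hx
    rw [Equiv.swap_inv, cobdry_swap ω halt i T,
      Equiv.Perm.sign_swap (Fin.castSucc_lt_succ : Fin.castSucc i < Fin.succ i).ne]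
    simp
  | one =>
    simp
  | mul x y _ _ hx hy =>
    have h : T ∘ ⇑(x * y)⁻¹ = (T ∘ ⇑y⁻¹) ∘ ⇑x⁻¹ := by
      funext z
      simp [mul_inv_rev, Function.comp]
    rw [h, hx _, hy _]
    simp only [map_mul]
    push_cast
    ring
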